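/- For every n×n matrix A with entries ±1, there exist sign vectors x, y ∈ {-1,+1}^n with ∑_{i,j} a_{ij} x_i y_j ≥ c · n^{3/2} for some absolute constant c > 0 (in fact c = (1+o(1))√(2/π)). -/

import Mathlib

open Finset

noncomputable def gbChi : Bool → ℝ := fun b => if b then 1 else -1

lemma gbChi_sq (b : Bool) : gbChi b ^ 2 = 1 := by cases b <;> simp [gbChi]

lemma gbChi_abs (b : Bool) : |gbChi b| = 1 := by cases b <;> simp [gbChi]

lemma gb_key (n : ℕ) (e : Fin n → ℕ) :
    ∑ y : Fin n → Bool, ∏ t, gbChi (y t) ^ e t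
      = ∏ t, ((1:ℝ) ^ e t + (-1) ^ e t) := by
  rw [show (∏ t, ((1:ℝ) ^ e t + (-1) ^ e t)) = ∏ t, ∑ b : Bool, gbChi b ^ e t by
    refine prod_congr rfl fun t _ => ?_
    simp [gbChi, add_comm]]
  rw [Fintype.prod_sum]

lemma gb_delta {n : ℕ} (y : Fin n → Bool) (j : Fin n) :
    ∏ t, gbChi (y t) ^ (if j = t then 1 else 0) = gbChi (y j) := by
  have : ∀ t, gbChi (y t) ^ (if j = t then 1 else 0) = if j = t then gbChi (y t) else 1 := by
    intro t; split <;> simp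
  simp only [this]
  simp

lemma gb_M2 {n : ℕ} (j k : Fin n) :
    ∑ y : Fin n → Bool, gbChi (y j) * gbChi (y k)
      = if j = k then (2:ℝ)^n else 0 := by
  have h : ∀ y : Fin n → Bool, gbChi (y j) * gbChi (y k)
      = ∏ t, gbChi (y t) ^ ((if j = t then 1 else 0) + (if k = t then 1 else 0)) := by
    intro y
    simp only [pow_add, prod_mul_distrib, gb_delta]
  simp only [h, gb_key]
  split
  · next hjk =>
    subst hjk
    rw [show (∏ t : Fin n,
        ((1:ℝ) ^ ((if j = t then 1 else 0) + if j = t then 1 else 0) +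
          (-1) ^ ((if j = t then 1 else 0) + if j = t then 1 else 0)))
        = ∏ _t : Fin n, (2:ℝ) from prod_congr rfl fun t _ => by split <;> norm_num]
    simp
  · next hjk =>
    refine prod_eq_zero (mem_univ j) ?_
    simp [hjk, if_neg (Ne.symm hjk)]

def gbE {n : ℕ} (j k l m t : Fin n) : ℕ :=
  (if j = t then 1 else 0) + (if k = t then 1 else 0)
    + (if l = t then 1 else 0) + (if m = t then 1 else 0)

lemma gb_M4_eq {n : ℕ} (j k l m : Fin n) :
    ∑ y : Fin n → Bool, gbChi (y j) * gbChi (y k) * gbChi (y l) * gbChi (y m)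
      = ∏ t, ((1:ℝ) ^ gbE j k l m t + (-1) ^ gbE j k l m t) := by
  have h : ∀ y : Fin n → Bool, gbChi (y j) * gbChi (y k) * gbChi (y l) * gbChi (y m)
      = ∏ t, gbChi (y t) ^ gbE j k l m t := by
    intro y
    simp only [gbE, pow_add, prod_mul_distrib, gb_delta]
  simp only [h, gb_key]

lemma gb_factor_nonneg (e : ℕ) : (0:ℝ) ≤ 1 ^ e + (-1) ^ e := by
  rcases neg_one_pow_eq_or ℝ e with h | h <;> rw [h] <;> norm_num

lemma gb_factor_le (e : ℕ) : (1:ℝ) ^ e + (-1) ^ e ≤ 2 := by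
  rcases neg_one_pow_eq_or ℝ e with h | h <;> rw [h] <;> norm_num

lemma gb_T_nonneg {n : ℕ} (j k l m : Fin n) :
    (0:ℝ) ≤ ∏ t, ((1:ℝ) ^ gbE j k l m t + (-1) ^ gbE j k l m t) :=
  prod_nonneg fun t _ => gb_factor_nonneg _

lemma gb_T_le {n : ℕ} (j k l m : Fin n) :
    ∏ t, ((1:ℝ) ^ gbE j k l m t + (-1) ^ gbE j k l m t) ≤ 2 ^ n := by
  calc ∏ t, ((1:ℝ) ^ gbE j k l m t + (-1) ^ gbE j k l m t)
      ≤ ∏ _t : Fin n, (2:ℝ) :=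
        prod_le_prod (fun t _ => gb_factor_nonneg _) (fun t _ => gb_factor_le _)
    _ = 2 ^ n := by simp

lemma gb_T_zero {n : ℕ} (j k l m t : Fin n) (ht : Odd (gbE j k l m t)) :
    ∏ s, ((1:ℝ) ^ gbE j k l m s + (-1) ^ gbE j k l m s) = 0 := by
  refine prod_eq_zero (mem_univ t) ?_
  rw [Odd.neg_one_pow ht, one_pow]
  ring

lemma gb_T_bound {n : ℕ} (j k l m : Fin n) :
    ∏ t, ((1:ℝ) ^ gbE j k l m t + (-1) ^ gbE j k l m t)
      ≤ 2 ^ n * ((if j = k ∧ l = m then (1:ℝ) else 0)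
        + (if j = l ∧ k = m then (1:ℝ) else 0)
        + (if j = m ∧ k = l then (1:ℝ) else 0)) := by
  by_cases h1 : j = k ∧ l = m
  · calc _ ≤ (2:ℝ) ^ n := gb_T_le j k l m
      _ ≤ _ := by
        rw [if_pos h1]
        have h2 : (0:ℝ) ≤ (if j = l ∧ k = m then (1:ℝ) else 0) := by positivity
        have h3 : (0:ℝ) ≤ (if j = m ∧ k = l then (1:ℝ) else 0) := by positivity
        nlinarith [pow_pos (show (0:ℝ) < 2 by norm_num) n]
  by_cases h2 : j = l ∧ k = m
  · calc _ ≤ (2:ℝ) ^ n := gb_T_le j k l m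
      _ ≤ _ := by
        rw [if_pos h2]
        have h1' : (0:ℝ) ≤ (if j = k ∧ l = m then (1:ℝ) else 0) := by positivity
        have h3 : (0:ℝ) ≤ (if j = m ∧ k = l then (1:ℝ) else 0) := by positivity
        nlinarith [pow_pos (show (0:ℝ) < 2 by norm_num) n]
  by_cases h3 : j = m ∧ k = l
  · calc _ ≤ (2:ℝ) ^ n := gb_T_le j k l m
      _ ≤ _ := by
        rw [if_pos h3]
        have h1' : (0:ℝ) ≤ (if j = k ∧ l = m then (1:ℝ) else 0) := by positivity
        have h2' : (0:ℝ) ≤ (if j = l ∧ k = m then (1:ℝ) else 0) := by positivity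
        nlinarith [pow_pos (show (0:ℝ) < 2 by norm_num) n]
  -- no pairing: some index has odd multiplicity
  have hzero : ∏ t, ((1:ℝ) ^ gbE j k l m t + (-1) ^ gbE j k l m t) = 0 := by
    by_cases hjk : j = k
    · have hlm : l ≠ m := fun h => h1 ⟨hjk, h⟩
      refine gb_T_zero j k l m l ?_
      by_cases hjl : j = l <;>
        simp [gbE, hjl, ← hjk, if_neg (Ne.symm hlm), Nat.odd_iff] <;>
        simp [hjk ▸ hjl]
    · by_cases hjl : j = l
      · have hkm : k ≠ m := fun h => h2 ⟨hjl, h⟩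
        refine gb_T_zero j k l m m ?_
        by_cases hjm : j = m <;>
          simp [gbE, hjm, if_neg hkm, ← hjl, Nat.odd_iff] <;>
          simp [hjl ▸ hjm]
      · by_cases hjm : j = m
        · have hkl : k ≠ l := fun h => h3 ⟨hjm, h⟩
          refine gb_T_zero j k l m l ?_
          have hml : m ≠ l := fun h => hjl (hjm.trans h)
          simp [gbE, if_neg hjl, if_neg hkl, if_neg hml, Nat.odd_iff]
        · refine gb_T_zero j k l m j ?_
          simp [gbE, if_neg (fun h : k = j => hjk h.symm),
            if_neg (fun h : l = j => hjl h.symm),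
            if_neg (fun h : m = j => hjm h.symm), Nat.odd_iff]
  rw [hzero, if_neg h1, if_neg h2, if_neg h3]
  simp

lemma gb_S2 {n : ℕ} (ε : Fin n → ℝ) (hε : ∀ j, ε j = 1 ∨ ε j = -1) :
    ∑ y : Fin n → Bool, (∑ j, ε j * gbChi (y j)) ^ 2 = n * 2 ^ n := by
  calc ∑ y : Fin n → Bool, (∑ j, ε j * gbChi (y j)) ^ 2
      = ∑ y : Fin n → Bool, ∑ j, ∑ k, (ε j * ε k) * (gbChi (y j) * gbChi (y k)) := by
        refine sum_congr rfl fun y _ => ?_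
        rw [sq, Finset.sum_mul_sum]
        exact sum_congr rfl fun j _ => sum_congr rfl fun k _ => by ring
    _ = ∑ j, ∑ k, (ε j * ε k) * ∑ y : Fin n → Bool, gbChi (y j) * gbChi (y k) := by
        rw [Finset.sum_comm]
        refine sum_congr rfl fun j _ => ?_
        rw [Finset.sum_comm]
        exact sum_congr rfl fun k _ => (mul_sum _ _ _).symm
    _ = ∑ _j : Fin n, (2:ℝ) ^ n := by
        refine sum_congr rfl fun j _ => ?_
        simp only [gb_M2, mul_ite, mul_zero]
        rw [Finset.sum_ite_eq univ j fun k => ε j * ε k * 2 ^ n]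
        rcases hε j with h | h <;> simp [h]
    _ = n * 2 ^ n := by simp [mul_comm]

lemma gb_S4 {n : ℕ} (ε : Fin n → ℝ) (hε : ∀ j, ε j = 1 ∨ ε j = -1) :
    ∑ y : Fin n → Bool, (∑ j, ε j * gbChi (y j)) ^ 4 ≤ 3 * n ^ 2 * 2 ^ n := by
  have habs : ∀ j, |ε j| = 1 := fun j => by rcases hε j with h | h <;> simp [h]
  calc ∑ y : Fin n → Bool, (∑ j, ε j * gbChi (y j)) ^ 4
      = ∑ y : Fin n → Bool, ∑ j, ∑ k, ∑ l, ∑ m, (ε j * ε k * ε l * ε m) *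
          (gbChi (y j) * gbChi (y k) * gbChi (y l) * gbChi (y m)) := by
        refine sum_congr rfl fun y _ => ?_
        set c : Fin n → ℝ := fun j => ε j * gbChi (y j) with hc
        have h2 : (∑ j, c j) ^ 2 = ∑ j, ∑ k, c j * c k := by
          rw [sq, Finset.sum_mul_sum]
        calc (∑ j, c j) ^ 4 = (∑ j, ∑ k, c j * c k) * (∑ l, ∑ m, c l * c m) := by
              rw [← h2]; ring
          _ = ∑ j, ∑ k, ∑ l, ∑ m, (c j * c k) * (c l * c m) := by
              rw [Finset.sum_mul]
              refine sum_congr rfl fun j _ => ?_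
              rw [Finset.sum_mul]
              refine sum_congr rfl fun k _ => ?_
              rw [Finset.mul_sum]
              refine sum_congr rfl fun l _ => ?_
              rw [Finset.mul_sum]
          _ = _ := by
              refine sum_congr rfl fun j _ => sum_congr rfl fun k _ =>
                sum_congr rfl fun l _ => sum_congr rfl fun m _ => ?_
              simp only [hc]
              ring
    _ = ∑ j, ∑ k, ∑ l, ∑ m, (ε j * ε k * ε l * ε m) *
          ∑ y : Fin n → Bool, gbChi (y j) * gbChi (y k) * gbChi (y l) * gbChi (y m) := by
        rw [Finset.sum_comm]
        refine sum_congr rfl fun j _ => ?_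
        rw [Finset.sum_comm]
        refine sum_congr rfl fun k _ => ?_
        rw [Finset.sum_comm]
        refine sum_congr rfl fun l _ => ?_
        rw [Finset.sum_comm]
        exact sum_congr rfl fun m _ => (mul_sum _ _ _).symm
    _ ≤ ∑ j, ∑ k, ∑ l, ∑ m : Fin n, (2:ℝ) ^ n * ((if j = k ∧ l = m then (1:ℝ) else 0)
          + (if j = l ∧ k = m then (1:ℝ) else 0)
          + (if j = m ∧ k = l then (1:ℝ) else 0)) := by
        refine sum_le_sum fun j _ => sum_le_sum fun k _ => sum_le_sum fun l _ =>
          sum_le_sum fun m _ => ?_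
        rw [gb_M4_eq]
        calc (ε j * ε k * ε l * ε m) * ∏ t, ((1:ℝ) ^ gbE j k l m t + (-1) ^ gbE j k l m t)
            ≤ ∏ t, ((1:ℝ) ^ gbE j k l m t + (-1) ^ gbE j k l m t) := by
              refine mul_le_of_le_one_left (gb_T_nonneg j k l m) ?_
              calc ε j * ε k * ε l * ε m ≤ |ε j * ε k * ε l * ε m| := le_abs_self _
                _ = 1 := by simp [abs_mul, habs]
          _ ≤ _ := gb_T_bound j k l m
    _ ≤ 3 * n ^ 2 * 2 ^ n := by
        simp only [mul_add, Finset.sum_add_distrib]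
        have e1 : ∑ j : Fin n, ∑ k : Fin n, ∑ l : Fin n, ∑ m : Fin n,
            (2:ℝ) ^ n * (if j = k ∧ l = m then (1:ℝ) else 0) = n ^ 2 * 2 ^ n := by
          simp [ite_and, Finset.sum_ite_eq, mul_ite, sq]
          ring
        have e2 : ∑ j : Fin n, ∑ k : Fin n, ∑ l : Fin n, ∑ m : Fin n,
            (2:ℝ) ^ n * (if j = l ∧ k = m then (1:ℝ) else 0) = n ^ 2 * 2 ^ n := by
          simp [ite_and, Finset.sum_ite_eq, mul_ite, sq]
          ring
        have e3 : ∑ j : Fin n, ∑ k : Fin n, ∑ l : Fin n, ∑ m : Fin n,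
            (2:ℝ) ^ n * (if j = m ∧ k = l then (1:ℝ) else 0) = n ^ 2 * 2 ^ n := by
          simp [ite_and, Finset.sum_ite_eq, mul_ite, sq]
          ring
        rw [e1, e2, e3]
        ring_nf
        nlinarith [pow_pos (show (0:ℝ) < 2 by norm_num) n, sq_nonneg (n:ℝ)]

lemma gb_row {n : ℕ} (hn : 1 ≤ n) (ε : Fin n → ℝ) (hε : ∀ j, ε j = 1 ∨ ε j = -1) :
    (2:ℝ) ^ n * Real.sqrt n / Real.sqrt 3 ≤ ∑ y : Fin n → Bool, |∑ j, ε j * gbChi (y j)| := by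
  set f : (Fin n → Bool) → ℝ := fun y => ∑ j, ε j * gbChi (y j) with hf
  set S1 := ∑ y : Fin n → Bool, |f y| with hS1def
  set S3 := ∑ y : Fin n → Bool, |f y| ^ 3 with hS3def
  have hS2 : ∑ y : Fin n → Bool, f y ^ 2 = n * 2 ^ n := gb_S2 ε hε
  have hS4 : ∑ y : Fin n → Bool, f y ^ 4 ≤ 3 * n ^ 2 * 2 ^ n := gb_S4 ε hε
  have hS4nn : (0:ℝ) ≤ ∑ y : Fin n → Bool, f y ^ 4 :=
    sum_nonneg fun y _ => by positivity
  have cs1 : (∑ y : Fin n → Bool, f y ^ 2) ^ 2 ≤ S1 * S3 := by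
    refine sum_sq_le_sum_mul_sum_of_sq_eq_mul univ (fun y _ => abs_nonneg _)
      (fun y _ => by positivity) (fun y _ => ?_)
    rw [show |f y| * |f y| ^ 3 = |f y| ^ 4 by ring, pow_abs,
      abs_of_nonneg (by positivity : (0:ℝ) ≤ f y ^ 4)]
    ring
  have cs2 : S3 ^ 2 ≤ (∑ y : Fin n → Bool, f y ^ 2) * ∑ y : Fin n → Bool, f y ^ 4 := by
    refine sum_sq_le_sum_mul_sum_of_sq_eq_mul univ (fun y _ => by positivity)
      (fun y _ => by positivity) (fun y _ => ?_)
    rw [show (|f y| ^ 3) ^ 2 = |f y| ^ 6 by ring, pow_abs,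
      abs_of_nonneg (by positivity : (0:ℝ) ≤ f y ^ 6)]
    ring
  have hS1nn : (0:ℝ) ≤ S1 := sum_nonneg fun y _ => abs_nonneg _
  have hS3nn : (0:ℝ) ≤ S3 := sum_nonneg fun y _ => by positivity
  have hA : (1:ℝ) ≤ (n:ℝ) := by exact_mod_cast hn
  have hP : (0:ℝ) < 2 ^ n := by positivity
  -- chain
  have c1 : ((n:ℝ) * 2 ^ n) ^ 4 ≤ (S1 * S3) ^ 2 := by
    calc ((n:ℝ) * 2 ^ n) ^ 4 = ((∑ y : Fin n → Bool, f y ^ 2) ^ 2) ^ 2 := by rw [hS2]; ring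
      _ ≤ (S1 * S3) ^ 2 := pow_le_pow_left₀ (sq_nonneg _) cs1 2
  have c2 : (S1 * S3) ^ 2 ≤ S1 ^ 2 * (((n:ℝ) * 2 ^ n) * (3 * n ^ 2 * 2 ^ n)) := by
    rw [mul_pow]
    refine mul_le_mul_of_nonneg_left ?_ (sq_nonneg S1)
    calc S3 ^ 2 ≤ (∑ y : Fin n → Bool, f y ^ 2) * ∑ y : Fin n → Bool, f y ^ 4 := cs2
      _ ≤ ((n:ℝ) * 2 ^ n) * (3 * n ^ 2 * 2 ^ n) := by
          rw [hS2]
          refine mul_le_mul_of_nonneg_left hS4 (by positivity)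
  have key : (n:ℝ) * ((2:ℝ) ^ n) ^ 2 ≤ 3 * S1 ^ 2 := by
    have hpos : (0:ℝ) < (n:ℝ) ^ 3 * ((2:ℝ) ^ n) ^ 2 := by positivity
    have h6 : ((n:ℝ) * ((2:ℝ) ^ n) ^ 2) * ((n:ℝ) ^ 3 * ((2:ℝ) ^ n) ^ 2)
        ≤ (3 * S1 ^ 2) * ((n:ℝ) ^ 3 * ((2:ℝ) ^ n) ^ 2) := by
      calc ((n:ℝ) * ((2:ℝ) ^ n) ^ 2) * ((n:ℝ) ^ 3 * ((2:ℝ) ^ n) ^ 2)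
          = ((n:ℝ) * 2 ^ n) ^ 4 := by ring
        _ ≤ S1 ^ 2 * (((n:ℝ) * 2 ^ n) * (3 * n ^ 2 * 2 ^ n)) := le_trans c1 c2
        _ = (3 * S1 ^ 2) * ((n:ℝ) ^ 3 * ((2:ℝ) ^ n) ^ 2) := by ring
    exact (mul_le_mul_iff_of_pos_right hpos).mp h6
  have key2 : ((2:ℝ) ^ n * Real.sqrt n / Real.sqrt 3) ^ 2 ≤ S1 ^ 2 := by
    rw [div_pow, mul_pow, Real.sq_sqrt (by linarith : (0:ℝ) ≤ (n:ℝ)),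
      Real.sq_sqrt (by norm_num : (0:ℝ) ≤ (3:ℝ))]
    rw [div_le_iff₀ (by norm_num : (0:ℝ) < 3)]
    calc ((2:ℝ) ^ n) ^ 2 * (n:ℝ) = (n:ℝ) * ((2:ℝ) ^ n) ^ 2 := by ring
      _ ≤ 3 * S1 ^ 2 := key
      _ = S1 ^ 2 * 3 := by ring
  have hlnn : (0:ℝ) ≤ (2:ℝ) ^ n * Real.sqrt n / Real.sqrt 3 := by positivity
  have := Real.sqrt_le_sqrt key2
  rwa [Real.sqrt_sq hlnn, Real.sqrt_sq hS1nn] at this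

/-- Gale–Berlekamp lower bound (Brown–Spencer): there is an absolute constant
`c > 0` such that for every `n` and every `n × n` matrix with `±1` entries
there exist sign vectors `x, y ∈ {±1}ⁿ` with
`∑ᵢ∑ⱼ aᵢⱼ xᵢ yⱼ ≥ c · n^(3/2)`. -/
theorem stmt_5 :
    ∃ c : ℝ, 0 < c ∧ ∀ (n : ℕ) (a : Fin n → Fin n → ℤ),
      (∀ i j, a i j = 1 ∨ a i j = -1) →
      ∃ x y : Fin n → ℤ, (∀ i, x i = 1 ∨ x i = -1) ∧ (∀ j, y j = 1 ∨ y j = -1) ∧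
        c * (n : ℝ) ^ ((3 : ℝ) / 2)
          ≤ ((∑ i, ∑ j, a i j * x i * y j : ℤ) : ℝ) := by
  refine ⟨(Real.sqrt 3)⁻¹, by positivity, ?_⟩
  intro n a ha
  by_cases hn0 : n = 0
  · subst hn0
    refine ⟨fun _ => 1, fun _ => 1, fun i => Or.inl rfl, fun j => Or.inl rfl, ?_⟩
    simp [Real.zero_rpow (by norm_num : (3:ℝ)/2 ≠ 0)]
  · have hn : 1 ≤ n := Nat.one_le_iff_ne_zero.mpr hn0
    have hnR : (0:ℝ) < (n:ℝ) := by exact_mod_cast hn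
    have hrow : ∀ i : Fin n, (2:ℝ) ^ n * Real.sqrt n / Real.sqrt 3 ≤
        ∑ y : Fin n → Bool, |∑ j, ((a i j : ℝ)) * gbChi (y j)| :=
      fun i => gb_row hn _ (fun j => by rcases ha i j with h | h <;> simp [h])
    have htot : (n:ℝ) * ((2:ℝ) ^ n * Real.sqrt n / Real.sqrt 3) ≤
        ∑ y : Fin n → Bool, ∑ i, |∑ j, ((a i j : ℝ)) * gbChi (y j)| := by
      rw [Finset.sum_comm]
      calc (n:ℝ) * ((2:ℝ) ^ n * Real.sqrt n / Real.sqrt 3)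
          = ∑ _i : Fin n, (2:ℝ) ^ n * Real.sqrt n / Real.sqrt 3 := by
            simp [mul_comm]
        _ ≤ _ := sum_le_sum fun i _ => hrow i
    have havg : ∑ _y : Fin n → Bool, ((n:ℝ) * Real.sqrt n / Real.sqrt 3) ≤
        ∑ y : Fin n → Bool, ∑ i, |∑ j, ((a i j : ℝ)) * gbChi (y j)| := by
      rw [Finset.sum_const, Finset.card_univ]
      have hcard : Fintype.card (Fin n → Bool) = 2 ^ n := by
        simp [Fintype.card_fun]
      rw [hcard, nsmul_eq_mul]
      push_cast
      calc (2:ℝ) ^ n * ((n:ℝ) * Real.sqrt n / Real.sqrt 3)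
          = (n:ℝ) * ((2:ℝ) ^ n * Real.sqrt n / Real.sqrt 3) := by ring
        _ ≤ _ := htot
    obtain ⟨y₀, -, hy₀⟩ := Finset.exists_le_of_sum_le Finset.univ_nonempty havg
    set Y : Fin n → ℤ := fun j => if y₀ j then 1 else -1 with hY
    set R : Fin n → ℤ := fun i => ∑ j, a i j * Y j with hRdef
    set X : Fin n → ℤ := fun i => if 0 ≤ R i then 1 else -1 with hX
    refine ⟨X, Y, fun i => by by_cases h : 0 ≤ R i <;> simp [hX, h],
      fun j => by by_cases h : y₀ j <;> simp [hY, h], ?_⟩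
    have hsum : ∑ i, ∑ j, a i j * X i * Y j = ∑ i, |R i| := by
      refine sum_congr rfl fun i _ => ?_
      have h1 : ∑ j, a i j * X i * Y j = X i * R i := by
        rw [hRdef, Finset.mul_sum]
        exact sum_congr rfl fun j _ => by ring
      rw [h1]
      by_cases h : 0 ≤ R i
      · simp [hX, h, abs_of_nonneg h]
      · rw [abs_of_neg (lt_of_not_ge h)]
        simp [hX, h]
    rw [hsum]
    have hR : ∀ i, ((R i : ℤ) : ℝ) = ∑ j, ((a i j : ℝ)) * gbChi (y₀ j) := by
      intro i
      rw [hRdef]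
      push_cast
      refine sum_congr rfl fun j _ => ?_
      by_cases h : y₀ j <;> simp [hY, gbChi, h]
    have hcast : ((∑ i, |R i| : ℤ) : ℝ) = ∑ i, |∑ j, ((a i j : ℝ)) * gbChi (y₀ j)| := by
      push_cast
      exact sum_congr rfl fun i _ => by rw [hR i]
    rw [hcast]
    refine le_trans (le_of_eq ?_) hy₀
    rw [show (3:ℝ)/2 = 1 + 1/2 by norm_num, Real.rpow_add hnR, Real.rpow_one,
      ← Real.sqrt_eq_rpow]
    ring
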